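/- Let $A$, $B$, $C$ be points on the unit circle with center $O$ such that the angle at $C$ is the largest angle of triangle $ABC$, and let $M$ be the second intersection of line $CO$ with the unit circle (the antipode of $C$). Then $MA + MB \ge 2$. -/

import Mathlib

open EuclideanGeometry

lemma key_ineq (u v w p q : ℝ) (hu1 : u < 1) (hv1 : v < 1) (huv : u ≤ v)
    (hwu : w ≤ u) (hg : u^2 + v^2 + w^2 = 1 + 2*u*v*w)
    (hp : p^2 = 2 + 2*u) (hq : q^2 = 2 + 2*v) (hp0 : 0 ≤ p) (hq0 : 0 ≤ q) :
    2 ≤ p + q := by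
  by_contra hlt
  push_neg at hlt
  have hpq : p ≤ q := by nlinarith
  have hp1 : p < 1 := by linarith
  have hq2 : q < 2 - p^2 := by nlinarith
  have hv' : v < 2*u^2 - 1 := by nlinarith
  have hu0 : u < 0 := by nlinarith
  have hs : (w - u*v)^2 = (1 - u^2) * (1 - v^2) := by linear_combination hg
  have ht : 0 < u * (v - 1) := by nlinarith
  have h5 : (1 - u^2) * (1 - v^2) < (u * (v - 1))^2 := by
    nlinarith [mul_pos (by linarith : (0:ℝ) < 1 - v) (by linarith : (0:ℝ) < 2*u^2 - 1 - v)]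
  have h6 : w - u*v ≤ -(u * (v - 1)) := by nlinarith
  nlinarith [mul_nonneg (by linarith : (0:ℝ) ≤ u*(v-1) - (w - u*v))
    (by linarith : (0:ℝ) ≤ -(w - u*v) - u*(v-1))]

theorem stmt_10 (A B C : EuclideanSpace ℝ (Fin 2))
    (hA : A ∈ Metric.sphere (0 : EuclideanSpace ℝ (Fin 2)) 1)
    (hB : B ∈ Metric.sphere (0 : EuclideanSpace ℝ (Fin 2)) 1)
    (hC : C ∈ Metric.sphere (0 : EuclideanSpace ℝ (Fin 2)) 1)
    (hAB : A ≠ B) (hBC : B ≠ C) (hCA : C ≠ A)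
    (h1 : EuclideanGeometry.angle B A C ≤ EuclideanGeometry.angle A C B)
    (h2 : EuclideanGeometry.angle A B C ≤ EuclideanGeometry.angle A C B) :
    2 ≤ dist (-C) A + dist (-C) B := by
  have hnA : ‖A‖ = 1 := by simpa using hA
  have hnB : ‖B‖ = 1 := by simpa using hB
  have hnC : ‖C‖ = 1 := by simpa using hC
  -- noncollinearity
  have hcos : EuclideanGeometry.Cospherical ({A, B, C} : Set (EuclideanSpace ℝ (Fin 2))) := by
    refine ⟨0, 1, ?_⟩
    intro p hp
    rcases hp with h | h | h <;> subst h <;> assumption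
  have hai : AffineIndependent ℝ ![A, B, C] :=
    hcos.affineIndependent_of_ne hAB hCA.symm hBC
  have hncol : ¬ Collinear ℝ ({A, B, C} : Set (EuclideanSpace ℝ (Fin 2))) :=
    affineIndependent_iff_not_collinear_set.mp hai
  -- strict triangle inequalities
  have hstrict1 : dist A C < dist A B + dist B C := by
    rcases lt_or_eq_of_le (dist_triangle A B C) with h | h
    · exact h
    · exact absurd (dist_add_dist_eq_iff.mp h.symm).collinear hncol
  have hstrict2 : dist B C < dist B A + dist A C := by
    rcases lt_or_eq_of_le (dist_triangle B A C) with h | h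
    · exact h
    · exfalso
      apply hncol
      have := (dist_add_dist_eq_iff.mp h.symm).collinear
      rwa [Set.insert_comm] at this
  -- side comparisons from angle comparisons
  set a := dist B C with ha_def
  set b := dist A C with hb_def
  set c := dist A B with hc_def
  have hapos : 0 < a := dist_pos.mpr hBC
  have hbpos : 0 < b := dist_pos.mpr (Ne.symm hCA)
  have hcpos : 0 < c := dist_pos.mpr hAB
  have lc1 := EuclideanGeometry.law_cos B A C
  have lc2 := EuclideanGeometry.law_cos A C B
  have lc3 := EuclideanGeometry.law_cos A B C
  rw [show dist B A = c from dist_comm B A, show dist C A = b from dist_comm C A] at lc1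
  rw [show dist C B = a from dist_comm C B] at lc3
  have hcg1 : Real.cos (angle A C B) ≤ Real.cos (angle B A C) :=
    Real.cos_le_cos_of_nonneg_of_le_pi (angle_nonneg B A C) (angle_le_pi A C B) h1
  have hcg2 : Real.cos (angle A C B) ≤ Real.cos (angle A B C) :=
    Real.cos_le_cos_of_nonneg_of_le_pi (angle_nonneg A B C) (angle_le_pi A C B) h2
  have e1a : 2*a*b*c*Real.cos (angle B A C) = a*(c*c + b*b - a*a) := by
    linear_combination a * lc1
  have e2a : 2*a*b*c*Real.cos (angle A C B) = c*(b*b + a*a - c*c) := by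
    linear_combination c * lc2
  have e3a : 2*a*b*c*Real.cos (angle A B C) = b*(c*c + a*a - b*b) := by
    linear_combination b * lc3
  have habc : (0:ℝ) ≤ 2*a*b*c := by positivity
  have hmul1 := mul_le_mul_of_nonneg_left hcg1 habc
  have hmul2 := mul_le_mul_of_nonneg_left hcg2 habc
  have e31 : c*(b*b + a*a - c*c) ≤ a*(c*c + b*b - a*a) := by linarith [hmul1, e1a, e2a]
  have e32 : c*(b*b + a*a - c*c) ≤ b*(c*c + a*a - b*b) := by linarith [hmul2, e3a, e2a]
  have hac : a ≤ c := by
    by_contra hcon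
    push_neg at hcon
    have hP : (0:ℝ) < (a + c - b) * (a + c + b) :=
      mul_pos (by linarith) (by linarith)
    have hneg : (c - a) * ((a + c - b) * (a + c + b)) < 0 :=
      mul_neg_of_neg_of_pos (by linarith) hP
    have hfac : a*(c*c + b*b - a*a) - c*(b*b + a*a - c*c)
        = (c - a) * ((a + c - b) * (a + c + b)) := by ring
    linarith [e31, hfac, hneg]
  have hbc : b ≤ c := by
    by_contra hcon
    push_neg at hcon
    have hP : (0:ℝ) < (b + c - a) * (b + c + a) :=
      mul_pos (by linarith) (by linarith)
    have hneg : (c - b) * ((b + c - a) * (b + c + a)) < 0 :=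
      mul_neg_of_neg_of_pos (by linarith) hP
    have hfac : b*(c*c + a*a - b*b) - c*(b*b + a*a - c*c)
        = (c - b) * ((b + c - a) * (b + c + a)) := by ring
    linarith [e32, hfac, hneg]
  -- inner products
  set u := (inner ℝ A C : ℝ) with hu_def
  set v := (inner ℝ B C : ℝ) with hv_def
  set w := (inner ℝ A B : ℝ) with hw_def
  have hb2 : b^2 = 2 - 2*u := by
    rw [hb_def, dist_eq_norm, norm_sub_sq_real, hnA, hnC, hu_def]; ring
  have ha2 : a^2 = 2 - 2*v := by
    rw [ha_def, dist_eq_norm, norm_sub_sq_real, hnB, hnC, hv_def]; ring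
  have hc2 : c^2 = 2 - 2*w := by
    rw [hc_def, dist_eq_norm, norm_sub_sq_real, hnA, hnB, hw_def]; ring
  have hwu : w ≤ u := by
    have h := pow_le_pow_left₀ hbpos.le hbc 2
    linarith [hb2, hc2]
  have hwv : w ≤ v := by
    have h := pow_le_pow_left₀ hapos.le hac 2
    linarith [ha2, hc2]
  have hu1 : u < 1 := by
    have h : 0 < b^2 := by positivity
    linarith [hb2]
  have hv1 : v < 1 := by
    have h : 0 < a^2 := by positivity
    linarith [ha2]
  -- coordinates
  have hu' : u = A 0 * C 0 + A 1 * C 1 := by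
    rw [hu_def]
    simp [PiLp.inner_apply, Fin.sum_univ_two, RCLike.inner_apply, conj_trivial]
    ring
  have hv' : v = B 0 * C 0 + B 1 * C 1 := by
    rw [hv_def]
    simp [PiLp.inner_apply, Fin.sum_univ_two, RCLike.inner_apply, conj_trivial]
    ring
  have hw' : w = A 0 * B 0 + A 1 * B 1 := by
    rw [hw_def]
    simp [PiLp.inner_apply, Fin.sum_univ_two, RCLike.inner_apply, conj_trivial]
    ring
  have hA1 : A 0^2 + A 1^2 = 1 := by
    have h := real_inner_self_eq_norm_sq A
    rw [hnA] at h
    simp only [PiLp.inner_apply, Fin.sum_univ_two, RCLike.inner_apply, conj_trivial] at h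
    linear_combination h
  have hB1 : B 0^2 + B 1^2 = 1 := by
    have h := real_inner_self_eq_norm_sq B
    rw [hnB] at h
    simp only [PiLp.inner_apply, Fin.sum_univ_two, RCLike.inner_apply, conj_trivial] at h
    linear_combination h
  have hC1 : C 0^2 + C 1^2 = 1 := by
    have h := real_inner_self_eq_norm_sq C
    rw [hnC] at h
    simp only [PiLp.inner_apply, Fin.sum_univ_two, RCLike.inner_apply, conj_trivial] at h
    linear_combination h
  have hg : u^2 + v^2 + w^2 = 1 + 2*u*v*w := by
    rw [hu', hv', hw']
    linear_combination (-((B 0 * C 0 + B 1 * C 1)^2) + (B 0^2 + B 1^2)*(C 0^2 + C 1^2)) * hA1 +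
      (-((A 0 * C 0 + A 1 * C 1)^2) + (C 0^2 + C 1^2)) * hB1 +
      (-((A 0 * B 0 + A 1 * B 1)^2) + 1) * hC1
  -- distances to -C
  have hp2 : dist (-C) A ^ 2 = 2 + 2*u := by
    rw [dist_eq_norm, show -C - A = -(A + C) by abel, norm_neg, norm_add_sq_real, hnA, hnC,
      ← hu_def]
    ring
  have hq2 : dist (-C) B ^ 2 = 2 + 2*v := by
    rw [dist_eq_norm, show -C - B = -(B + C) by abel, norm_neg, norm_add_sq_real, hnB, hnC,
      ← hv_def]
    ring
  rcases le_total u v with huv | hvu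
  · exact key_ineq u v w (dist (-C) A) (dist (-C) B) hu1 hv1 huv hwu hg hp2 hq2 dist_nonneg dist_nonneg
  · have hg' : v^2 + u^2 + w^2 = 1 + 2*v*u*w := by linear_combination hg
    rw [add_comm]
    exact key_ineq v u w (dist (-C) B) (dist (-C) A) hv1 hu1 hvu hwv hg' hq2 hp2 dist_nonneg dist_nonneg
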